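/- Suppose nonzero complex numbers ω, ω̄, ω̃, ω̄̃ (=ωᵦₜ), ω̄̄, ω̃̃ and their further shifts satisfy the lattice mKdV equation ωᵦₜ*(q*ω̃ - p*ω̄) = ω*(q*ω̄ - p*ω̃) at the base point, its l-shift ω̄ᵦₜ*(q*ω̃ᵦ - P*ω̄̄) = ω̄*(q*ω̄̄ - P*ω̃ᵦ), and its m-shift ω̃ᵦₜ*(Q*ω̃̃ - p*ωᵦₜ) = ω̃*(Q*ωᵦₜ - p*ω̃̃), where ω̃ᵦ = ω̄ₜ = ωᵦₜ. Define x = ω̄/ω̃, xb = ω̄̄/ωᵦₜ, xt = ωᵦₜ/ω̃̃, xbt = ω̄ᵦₜ/ω̃ᵦₜ (computed from the shifted equations). Then x, xb, xt, xbt satisfy the lattice sine-Gordon equation xbt/x = ((P - q*xb)/(q - P*xb))*((Q - p*xt)/(p - Q*xt)). -/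
import Mathlib

/-- Transformation from the lattice mKdV equation to the lattice sine-Gordon
equation: if `ω` satisfies the lattice mKdV equation (and its `l`- and
`m`-shifts), then `x = ω̄/ω̃` satisfies the lattice sine-Gordon equation. -/
theorem mKdV_to_lsG
    (ω ωb ωt ωbt ωbb ωtt ωbbt ωttb p P q Q x xb xt xbt : ℂ)
    (hω : ω ≠ 0) (hωb : ωb ≠ 0) (hωt : ωt ≠ 0) (hωbt : ωbt ≠ 0)
    (hωbb : ωbb ≠ 0) (hωtt : ωtt ≠ 0) (hωbbt : ωbbt ≠ 0) (hωttb : ωttb ≠ 0)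
    (hd1 : q * ωt - p * ωb ≠ 0) (hd2 : q * ωbt - P * ωbb ≠ 0)
    (hd3 : Q * ωtt - p * ωbt ≠ 0)
    (hmkdv : ωbt * (q * ωt - p * ωb) = ω * (q * ωb - p * ωt))
    (hmkdvL : ωbbt * (q * ωbt - P * ωbb) = ωb * (q * ωbb - P * ωbt))
    (hmkdvM : ωttb * (Q * ωtt - p * ωbt) = ωt * (Q * ωbt - p * ωtt))
    (hx : x = ωb / ωt) (hxb : xb = ωbb / ωbt)
    (hxt : xt = ωbt / ωtt) (hxbt : xbt = ωbbt / ωttb)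
    (he1 : q - P * xb ≠ 0) (he2 : p - Q * xt ≠ 0) :
    xbt / x = ((P - q * xb) / (q - P * xb)) * ((Q - p * xt) / (p - Q * xt)) := by
  subst hx hxb hxt hxbt
  have he2' : p * ωtt - Q * ωbt ≠ 0 := by
    intro h; apply he2; field_simp; linear_combination h
  have hf1 : (P - q * (ωbb / ωbt)) / (q - P * (ωbb / ωbt))
      = (P * ωbt - q * ωbb) / (q * ωbt - P * ωbb) := by
    rw [div_eq_div_iff he1 hd2]; field_simp
  have hf2 : (Q - p * (ωbt / ωtt)) / (p - Q * (ωbt / ωtt))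
      = (Q * ωtt - p * ωbt) / (p * ωtt - Q * ωbt) := by
    rw [div_eq_div_iff he2 he2']; field_simp
  rw [hf1, hf2, div_mul_div_comm, div_div_div_eq,
    div_eq_div_iff (by exact mul_ne_zero hωttb hωb) (mul_ne_zero hd2 he2')]
  linear_combination (ωt * (p * ωtt - Q * ωbt)) * hmkdvL - (ωb * (P * ωbt - q * ωbb)) * hmkdvM
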